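/- Let G = B ⊕ D be an abelian p-group with B bounded of exponent n and D divisible. If x = b + d with b ∈ B, d ∈ D, exp(b) = n = exp(B), and exp(d) > n, then every homomorphism ⟨x⟩ → G extends to an endomorphism of G. -/

import Mathlib

open AddSubgroup

/-- The `p`-height of an element, as an extended natural number. -/
noncomputable def pHeight (p : ℕ) {G : Type*} [AddCommGroup G] (x : G) : ℕ∞ :=
  sSup {n : ℕ∞ | ∃ m : ℕ, n = (m : ℕ∞) ∧ ∃ y : G, p ^ m • y = x}

/-- `G` is an abelian `p`-group. -/
def IsPGrp (p : ℕ) (G : Type*) [AddCommGroup G] : Prop :=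
  ∀ x : G, ∃ n : ℕ, p ^ n • x = 0

/-- `H ∈ Q(G)`: every homomorphism `H → G` extends to an endomorphism of `G`. -/
def InQ {G : Type*} [AddCommGroup G] (H : AddSubgroup G) : Prop :=
  ∀ f : H →+ G, ∃ g : G →+ G, ∀ x : H, g x = f x

/-- `H ∈ P(G)`: every monomorphism `H → G` extends to an endomorphism of `G`. -/
def InP {G : Type*} [AddCommGroup G] (H : AddSubgroup G) : Prop :=
  ∀ f : H →+ G, Function.Injective f → ∃ g : G →+ G, ∀ x : H, g x = f x

/-- `H ∈ W(G)`: every endomorphism of `H` extends to an endomorphism of `G`. -/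
def InW {G : Type*} [AddCommGroup G] (H : AddSubgroup G) : Prop :=
  ∀ f : H →+ H, ∃ g : G →+ G, ∀ x : H, g x = (f x : G)

/-- `K` is an internal direct sum of cyclic subgroups. -/
def IsDirectSumOfCyclics {G : Type*} [AddCommGroup G] (K : AddSubgroup G) : Prop :=
  ∃ (ι : Type) (a : ι → G), (∀ i, a i ∈ K) ∧ (⨆ i, zmultiples (a i)) = K ∧
    iSupIndep (fun i => zmultiples (a i))

/-- `K` is a `p`-pure subgroup: `pⁿG ∩ K = pⁿK`. -/
def IsPure (p : ℕ) {G : Type*} [AddCommGroup G] (K : AddSubgroup G) : Prop :=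
  ∀ n : ℕ, ∀ x ∈ K, (∃ y : G, p ^ n • y = x) → ∃ z ∈ K, p ^ n • z = x

/-- The quotient `G/K` is divisible (equivalently `G = K + pG`). -/
def QuotDivisible (p : ℕ) {G : Type*} [AddCommGroup G] (K : AddSubgroup G) : Prop :=
  ∀ x : G, ∃ y : G, x - p • y ∈ K

/-- The Ulm sequence of `x` has a gap before index `k` (with `h₋₁ = -1`). -/
def HasGapBefore (p : ℕ) {G : Type*} [AddCommGroup G] (x : G) (k : ℕ) : Prop :=
  if k = 0 then 0 < pHeight p x
  else pHeight p (p ^ (k - 1) • x) + 1 < pHeight p (p ^ k • x)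


section Helpers

lemma exists_hom_zmultiples' {M N : Type*} [AddCommGroup M] [AddCommGroup N] (a : M) (c : N)
    (h : ∀ t : ℤ, t • a = 0 → t • c = 0) :
    ∃ ψ : (zmultiples a) →+ N, ψ ⟨a, mem_zmultiples a⟩ = c := by
  have hrep : ∀ z : zmultiples a, ∃ t : ℤ, t • a = (z : M) := fun z => mem_zmultiples_iff.mp z.2
  choose rep hrepspec using hrep
  have key : ∀ (z : zmultiples a) (t : ℤ), t • a = (z : M) → rep z • c = t • c := by
    intro z t ht
    have h0 : (rep z - t) • a = 0 := by rw [sub_smul, hrepspec z, ht, sub_self]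
    have h2 := h _ h0
    rwa [sub_smul, sub_eq_zero] at h2
  refine ⟨AddMonoidHom.mk' (fun z => rep z • c) ?_, ?_⟩
  · intro z₁ z₂
    have : (rep z₁ + rep z₂) • a = ((z₁ + z₂ : zmultiples a) : M) := by
      rw [add_smul, hrepspec z₁, hrepspec z₂]; rfl
    rw [key _ _ this, add_smul]
  · simpa using key ⟨a, mem_zmultiples a⟩ 1 (by simp)

lemma exists_extend_of_divisible' {M : Type*} [AddCommGroup M]
    (hdiv : ∀ m : ℤ, m ≠ 0 → ∀ z : M, ∃ w : M, m • w = z)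
    (d : M) (c : M) (h : ∀ t : ℤ, t • d = 0 → t • c = 0) :
    ∃ ψ : M →+ M, ψ d = c := by
  have baer : Module.Baer ℤ M := by
    intro I g
    have : I.IsPrincipal := IsPrincipalIdealRing.principal I
    set a := Submodule.IsPrincipal.generator I with ha
    by_cases ha0 : a = 0
    · refine ⟨0, fun x hx => ?_⟩
      have hx0 : x = 0 := by
        have := (Submodule.IsPrincipal.mem_iff_eq_smul_generator I).mp hx
        obtain ⟨s, rfl⟩ := this
        rw [← ha, ha0, smul_zero]
      subst hx0
      simp [(show (⟨0, hx⟩ : I) = 0 from rfl)]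
    · obtain ⟨w, hw⟩ := hdiv a ha0 (g ⟨a, Submodule.IsPrincipal.generator_mem I⟩)
      refine ⟨LinearMap.toSpanSingleton ℤ M w, fun x hx => ?_⟩
      obtain ⟨s, hs⟩ := (Submodule.IsPrincipal.mem_iff_eq_smul_generator I).mp hx
      have hxa : (⟨x, hx⟩ : I) = s • ⟨a, Submodule.IsPrincipal.generator_mem I⟩ := by
        apply Subtype.ext
        simpa using hs
      rw [hxa, map_smul]
      simp only [LinearMap.toSpanSingleton_apply]
      rw [hs, ← ha]
      rw [smul_eq_mul, mul_smul, hw]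
  have inj : Module.Injective ℤ M := baer.injective
  obtain ⟨ψ₀, hψ₀⟩ := exists_hom_zmultiples' (N := M) d c h
  obtain ⟨hlin, hspec⟩ := inj.out ((zmultiples d).subtype.toIntLinearMap)
    Subtype.coe_injective ψ₀.toIntLinearMap
  refine ⟨hlin.toAddMonoidHom, ?_⟩
  have := hspec ⟨d, mem_zmultiples d⟩
  simpa [hψ₀] using this

lemma exists_hom_of_maxOrder' {M : Type*} [AddCommGroup M] {p n : ℕ} (hp : p.Prime) (hn : 0 < n)
    (hM : ∀ z : M, p ^ n • z = 0) {b : M} (hb : addOrderOf b = p ^ n) (c : M) :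
    ∃ φ : M →+ M, φ b = c := by
  classical
  set H := zmultiples b with hH
  have horder : ∀ t : ℤ, t • b = 0 → ((p:ℤ)^n ∣ t) := by
    intro t ht
    have h1 : ((addOrderOf b : ℤ)) ∣ t := addOrderOf_dvd_iff_zsmul_eq_zero.mpr ht
    rwa [hb, Nat.cast_pow] at h1
  have hzorn : ∃ C, Disjoint H C ∧ ∀ C', Disjoint H C' → C ≤ C' → C' ≤ C := by
    have hchains : ∀ c ⊆ {C : AddSubgroup M | Disjoint H C}, IsChain (· ≤ ·) c →
        ∃ ub ∈ {C : AddSubgroup M | Disjoint H C}, ∀ z ∈ c, z ≤ ub := by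
      intro c hcs hchain
      rcases Set.eq_empty_or_nonempty c with rfl | hne
      · exact ⟨⊥, disjoint_bot_right, by simp⟩
      · refine ⟨sSup c, ?_, fun z hz => le_sSup hz⟩
        show Disjoint H (sSup c)
        rw [AddSubgroup.disjoint_def]
        intro x hxH hxS
        obtain ⟨C₀, hC₀c, hxC₀⟩ :=
          (AddSubgroup.mem_sSup_of_directedOn hne hchain.directedOn).mp hxS
        exact AddSubgroup.disjoint_def.mp (hcs hC₀c) hxH hxC₀
    obtain ⟨C, hC⟩ := zorn_le₀ {C : AddSubgroup M | Disjoint H C} hchains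
    exact ⟨C, hC.prop, fun C' h1 h2 => hC.2 h1 h2⟩
  obtain ⟨C, hCmem, hCmax⟩ := hzorn
  have key : ∀ g : M, p • g ∈ H ⊔ C → g ∈ H ⊔ C := by
    intro g hpg
    by_contra hg
    obtain ⟨yb, hybH, c₀, hc₀C, hsum⟩ := (AddSubgroup.mem_sup).mp hpg
    obtain ⟨m, hm⟩ := mem_zmultiples_iff.mp hybH
    have hpn : (p ^ (n-1) : ℕ) • (p • g) = 0 := by
      rw [smul_smul, ← pow_succ, Nat.sub_add_cancel hn]
      exact hM g
    have hzero : p ^ (n-1) • yb + p ^ (n-1) • c₀ = 0 := by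
      rw [← smul_add, hsum]; exact hpn
    have hybzero : p ^ (n-1) • yb = 0 := by
      have h1 : p ^ (n-1) • yb ∈ H := AddSubgroup.nsmul_mem H hybH _
      have h2 : p ^ (n-1) • yb = -(p ^ (n-1) • c₀) := eq_neg_of_add_eq_zero_left hzero
      have h3 : p ^ (n-1) • yb ∈ C := h2 ▸ AddSubgroup.neg_mem C (AddSubgroup.nsmul_mem C hc₀C _)
      exact AddSubgroup.disjoint_def.mp hCmem h1 h3
    have hdvd : (p:ℤ) ∣ m := by
      have hyz : ((p:ℤ)^(n-1)) • yb = 0 := by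
        rw [← Nat.cast_pow, natCast_zsmul]; exact hybzero
      have hmb : ((p:ℤ)^(n-1) * m) • b = 0 := by
        rw [mul_smul, hm]; exact hyz
      have hd := horder _ hmb
      have hppow : ((p:ℤ)^(n-1) * (p:ℤ)) ∣ ((p:ℤ)^(n-1) * m) := by
        rw [← pow_succ, Nat.sub_add_cancel hn]; exact hd
      have hpne : ((p:ℤ)^(n-1)) ≠ 0 := pow_ne_zero _ (by exact_mod_cast hp.ne_zero)
      exact (mul_dvd_mul_iff_left hpne).mp hppow
    obtain ⟨m', rfl⟩ := hdvd
    set y := g - m' • b with hy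
    have hpy : (p:ℤ) • y = c₀ := by
      rw [hy, smul_sub, smul_smul]
      have h1 : (p:ℤ) • g = yb + c₀ := by rw [natCast_zsmul, ← hsum]
      rw [h1, ← hm, mul_comm]
      abel
    have hyn : y ∉ H ⊔ C := by
      intro hyin
      apply hg
      have hgy : g = y + m' • b := by rw [hy]; abel
      rw [hgy]
      exact AddSubgroup.add_mem _ hyin
        (AddSubgroup.mem_sup_left (AddSubgroup.zsmul_mem H (mem_zmultiples b) m'))
    have hyC : y ∉ C := fun hyC => hyn (AddSubgroup.mem_sup_right hyC)
    have hnotdisj : ¬ Disjoint H (C ⊔ zmultiples y) := by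
      intro hdisj
      have := hCmax _ hdisj le_sup_left
      exact hyC (this (AddSubgroup.mem_sup_right (mem_zmultiples y)))
    rw [AddSubgroup.disjoint_def] at hnotdisj
    push_neg at hnotdisj
    obtain ⟨h, hhH, hhCY, hh0⟩ := hnotdisj
    obtain ⟨c₁, hc₁C, z, hzY, hsum2⟩ := (AddSubgroup.mem_sup).mp hhCY
    obtain ⟨t, ht⟩ := mem_zmultiples_iff.mp hzY
    by_cases hpt : (p:ℤ) ∣ t
    · obtain ⟨t', rfl⟩ := hpt
      have hzC : z ∈ C := by
        rw [← ht, mul_comm, mul_smul, hpy]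
        exact AddSubgroup.zsmul_mem C hc₀C t'
      have hhC : h ∈ C := by rw [← hsum2]; exact AddSubgroup.add_mem C hc₁C hzC
      exact hh0 (AddSubgroup.disjoint_def.mp hCmem hhH hhC)
    · have hcop : IsCoprime ((p:ℤ)^n) t :=
        ((Nat.prime_iff_prime_int.mp hp).coprime_iff_not_dvd.mpr hpt).pow_left
      obtain ⟨v, u, huv⟩ := hcop
      have hyin : y ∈ H ⊔ C := by
        have h1 : t • y ∈ H ⊔ C := by
          have hty : t • y = h - c₁ := by rw [← hsum2, ht]; abel
          rw [hty]
          exact AddSubgroup.sub_mem _ (AddSubgroup.mem_sup_left hhH)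
            (AddSubgroup.mem_sup_right hc₁C)
        have h2 : ((p:ℤ)^n) • y = 0 := by
          rw [← Nat.cast_pow, natCast_zsmul]; exact hM y
        have hexp : y = u • (t • y) + v • (((p:ℤ)^n) • y) := by
          rw [smul_smul, smul_smul, ← add_smul]
          have h3 : u * t + v * (p:ℤ)^n = 1 := by linarith [huv]
          rw [h3, one_smul]
        rw [hexp, h2, smul_zero, add_zero]
        exact AddSubgroup.zsmul_mem _ h1 u
      exact hyn hyin
  have hall : ∀ g : M, g ∈ H ⊔ C := by
    have haux : ∀ (k : ℕ) (g : M), p ^ k • g ∈ H ⊔ C → g ∈ H ⊔ C := by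
      intro k
      induction k with
      | zero => intro g hg; simpa using hg
      | succ k ih =>
        intro g hg
        apply key
        apply ih
        rw [smul_smul, ← pow_succ]
        exact hg
    intro g
    exact haux n g (by rw [hM g]; exact AddSubgroup.zero_mem _)
  have hcompl : IsCompl H C := ⟨hCmem, codisjoint_iff_le_sup.mpr (fun g _ => hall g)⟩
  have hcompl' : IsCompl (AddSubgroup.toIntSubmodule H) (AddSubgroup.toIntSubmodule C) :=
    AddSubgroup.toIntSubmodule.isCompl hcompl
  set π := Submodule.linearProjOfIsCompl _ _ hcompl' with hπ
  obtain ⟨ψ, hψ⟩ := exists_hom_zmultiples' (N := M) b c (by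
    intro t ht
    obtain ⟨w, hw⟩ := horder t ht
    rw [hw, mul_smul, ← Nat.cast_pow, natCast_zsmul]
    rw [hM (w • c)])
  have hbmem : b ∈ AddSubgroup.toIntSubmodule H := mem_zmultiples b
  set e : ↥(AddSubgroup.toIntSubmodule H) →+ ↥H :=
    AddMonoidHom.mk' (fun z => ⟨z.1, z.2⟩) (fun _ _ => rfl) with he
  refine ⟨ψ.comp (e.comp π.toAddMonoidHom), ?_⟩
  have hπb : π b = ⟨b, hbmem⟩ := Submodule.linearProjOfIsCompl_apply_left hcompl' ⟨b, hbmem⟩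
  simp only [AddMonoidHom.comp_apply, LinearMap.toAddMonoidHom_coe, hπb]
  have : e ⟨b, hbmem⟩ = ⟨b, mem_zmultiples b⟩ := rfl
  rw [this, hψ]

end Helpers

theorem stmt3 {G : Type*} [AddCommGroup G] (p : ℕ) (hp : p.Prime) (hG : IsPGrp p G)
    (B D : AddSubgroup G) (hBD : IsCompl B D) (n : ℕ) (hn : 0 < n)
    (hBbd : ∀ b ∈ B, p ^ n • b = 0) (hBexp : ∃ b ∈ B, p ^ (n - 1) • b ≠ 0)
    (hDdiv : ∀ d ∈ D, ∃ d' ∈ D, p • d' = d)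
    (x b d : G) (hb : b ∈ B) (hd : d ∈ D) (hx : x = b + d)
    (hob : addOrderOf b = p ^ n)
    (e' : ℕ) (hod : addOrderOf d = p ^ e') (he' : n < e') :
    InQ (zmultiples x) := by
  classical
  intro f
  set B' := AddSubgroup.toIntSubmodule B with hB'
  set D' := AddSubgroup.toIntSubmodule D with hD'
  have hc : IsCompl B' D' := AddSubgroup.toIntSubmodule.isCompl hBD
  set πB := Submodule.linearProjOfIsCompl B' D' hc with hπB
  set πD := Submodule.linearProjOfIsCompl D' B' hc.symm with hπD
  set y := f ⟨x, mem_zmultiples x⟩ with hy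
  -- p^e' kills x and y
  have hxe : p ^ e' • x = 0 := by
    have h1 : p ^ e' • b = 0 := by
      have : p ^ (e' - n) • (p ^ n • b) = 0 := by rw [hBbd b hb, smul_zero]
      rwa [smul_smul, ← pow_add, Nat.sub_add_cancel he'.le] at this
    have h2 : p ^ e' • d = 0 := by
      rw [← addOrderOf_dvd_iff_nsmul_eq_zero, hod]
    rw [hx, smul_add, h1, h2, add_zero]
  have hye : p ^ e' • y = 0 := by
    have : (p ^ e' • (⟨x, mem_zmultiples x⟩ : zmultiples x)) = 0 :=
      Subtype.ext (by simpa using hxe)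
    rw [hy, ← map_nsmul, this, map_zero]
  set yB := πB y with hyB
  set yD := πD y with hyD
  -- B side
  have hMB : ∀ z : ↥B', p ^ n • z = 0 := by
    intro z
    exact Subtype.ext (by simpa using hBbd (z : G) z.2)
  have hbB' : b ∈ B' := hb
  have hobB : addOrderOf (⟨b, hbB'⟩ : ↥B') = p ^ n := by
    have h1 : addOrderOf ((B'.subtype.toAddMonoidHom) (⟨b, hbB'⟩ : ↥B'))
        = addOrderOf (⟨b, hbB'⟩ : ↥B') :=
      addOrderOf_injective B'.subtype.toAddMonoidHom Subtype.coe_injective _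
    rw [← hob, ← h1]
    rfl
  obtain ⟨φ, hφ⟩ := exists_hom_of_maxOrder' hp hn hMB hobB yB
  -- D side
  have hdD' : d ∈ D' := hd
  have hpdiv : ∀ z : ↥D', ∃ w : ↥D', p • w = z := by
    intro z
    obtain ⟨w, hwD, hw⟩ := hDdiv (z : G) z.2
    exact ⟨⟨w, hwD⟩, Subtype.ext (by simpa using hw)⟩
  have hpkdiv : ∀ (k : ℕ) (z : ↥D'), ∃ w, p ^ k • w = z := by
    intro k
    induction k with
    | zero => intro z; exact ⟨z, by simp⟩
    | succ k ih =>
      intro z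
      obtain ⟨w1, hw1⟩ := hpdiv z
      obtain ⟨w2, hw2⟩ := ih w1
      refine ⟨w2, ?_⟩
      rw [pow_succ', mul_smul, hw2, hw1]
  have hdiv : ∀ m : ℤ, m ≠ 0 → ∀ z : ↥D', ∃ w : ↥D', m • w = z := by
    intro m hm z
    obtain ⟨t, htz⟩ : ∃ t, p ^ t • z = 0 := by
      obtain ⟨t, htz⟩ := hG (z : G)
      exact ⟨t, Subtype.ext (by simpa using htz)⟩
    set k := m.natAbs.factorization p with hk
    set u := m.natAbs / p ^ k with hu
    have hufact : p ^ k * u = m.natAbs := Nat.ordProj_mul_ordCompl_eq_self m.natAbs p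
    have hpu : ¬ (p ∣ u) := Nat.not_dvd_ordCompl hp (Int.natAbs_ne_zero.mpr hm)
    obtain ⟨w1, hw1⟩ := hpkdiv k z
    have hw1t : p ^ (t + k) • w1 = 0 := by
      rw [pow_add, mul_smul, hw1, htz]
    have hcop : IsCoprime ((p:ℤ) ^ (t + k)) (u : ℤ) := by
      have : ¬ ((p:ℤ) ∣ (u:ℤ)) := by exact_mod_cast hpu
      exact (((Nat.prime_iff_prime_int.mp hp).coprime_iff_not_dvd.mpr this)).pow_left
    obtain ⟨v, a, hva⟩ := hcop
    have hau : ((a * u) : ℤ) • w1 = w1 := by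
      have h0 : ((p:ℤ) ^ (t + k)) • w1 = 0 := by
        rw [← Nat.cast_pow, natCast_zsmul]; exact hw1t
      have : (v * (p:ℤ) ^ (t + k) + a * u) • w1 = w1 := by rw [hva, one_smul]
      rwa [add_smul, mul_smul, h0, smul_zero, zero_add] at this
    have hkey : (((m.natAbs : ℤ)) * a) • w1 = z := by
      have : ((m.natAbs : ℤ) * a) = (p:ℤ) ^ k * (a * u) := by
        rw [← hufact]; push_cast; ring
      rw [this, mul_smul, hau, ← Nat.cast_pow, natCast_zsmul, hw1]
    rcases Int.natAbs_eq m with hm' | hm'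
    · refine ⟨a • w1, ?_⟩
      rw [smul_smul]
      rw [← hm'] at hkey
      exact hkey
    · refine ⟨(-a) • w1, ?_⟩
      rw [smul_smul]
      have h2 : m * (-a) = (m.natAbs : ℤ) * a := by
        have h3 : -m = (m.natAbs : ℤ) := by omega
        calc m * (-a) = (-m) * a := by ring
          _ = (m.natAbs : ℤ) * a := by rw [h3]
      rw [h2]
      exact hkey
  have hdord : ∀ t : ℤ, t • (⟨d, hdD'⟩ : ↥D') = 0 → t • yD = 0 := by
    intro t ht
    have htd : t • d = 0 := by
      have := congrArg (Subtype.val) ht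
      simpa using this
    have hdvd : ((p:ℤ) ^ e') ∣ t := by
      have h1 : ((addOrderOf d : ℤ)) ∣ t := addOrderOf_dvd_iff_zsmul_eq_zero.mpr htd
      rwa [hod, Nat.cast_pow] at h1
    obtain ⟨w, rfl⟩ := hdvd
    have hpey : ((p:ℤ) ^ e') • yD = 0 := by
      rw [← Nat.cast_pow, natCast_zsmul, hyD, ← map_nsmul, hye, map_zero]
    rw [mul_comm, mul_smul, hpey, smul_zero]
  obtain ⟨ψ, hψ⟩ := exists_extend_of_divisible' hdiv ⟨d, hdD'⟩ yD hdord
  -- assemble g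
  set g : G →+ G :=
    (B'.subtype.toAddMonoidHom.comp (φ.comp πB.toAddMonoidHom)) +
    (D'.subtype.toAddMonoidHom.comp (ψ.comp πD.toAddMonoidHom)) with hg
  have hπBx : πB x = ⟨b, hbB'⟩ := by
    have : x = (⟨b, hbB'⟩ : ↥B') + (⟨d, hdD'⟩ : ↥D') := hx
    rw [this, map_add]
    erw [Submodule.linearProjOfIsCompl_apply_left hc ⟨b, hbB'⟩,
      Submodule.linearProjOfIsCompl_apply_right hc ⟨d, hdD'⟩, add_zero]
  have hπDx : πD x = ⟨d, hdD'⟩ := by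
    have : x = (⟨b, hbB'⟩ : ↥B') + (⟨d, hdD'⟩ : ↥D') := hx
    rw [this, map_add]
    erw [Submodule.linearProjOfIsCompl_apply_left hc.symm ⟨d, hdD'⟩,
      Submodule.linearProjOfIsCompl_apply_right hc.symm ⟨b, hbB'⟩, zero_add]
  have hgx : g x = y := by
    rw [hg]
    simp only [AddMonoidHom.add_apply, AddMonoidHom.comp_apply, LinearMap.toAddMonoidHom_coe]
    rw [hπBx, hπDx, hφ, hψ]
    exact Submodule.projection_add_projection_eq_self hc y
  refine ⟨g, ?_⟩
  intro z
  obtain ⟨t, ht⟩ := mem_zmultiples_iff.mp z.2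
  have hz : z = t • (⟨x, mem_zmultiples x⟩ : zmultiples x) := Subtype.ext (by simpa using ht.symm)
  rw [hz, map_zsmul, ← hy]
  have : ((t • (⟨x, mem_zmultiples x⟩ : zmultiples x) : zmultiples x) : G) = t • x := rfl
  rw [this, map_zsmul, hgx]
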